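/- For the (k+1)×(k+1) block upper-triangular matrix function with diagonal blocks A_{11}(x),…,A_{nn}(x) and upper blocks A_{ij}(x), the (i,n) block of its product integral satisfies the recursion B_{i,n}(s,t) = Σ_{j=i+1}^n ∫_s^t F_{A_{ii}}(s,x) A_{ij}(x) B_{jn}(x,t) dx, where F_{A_{ii}}(s,x) = ∏_s^x (I + A_{ii}(u) du) and B_{jn} denotes the (j,n) block of the product integral of the sub-block-matrix. -/

import Mathlib

open Matrix MeasureTheory Set

attribute [local instance] Matrix.linftyOpNormedAddCommGroup Matrix.linftyOpNormedSpace
  Matrix.linftyOpNormedRing Matrix.linftyOpNormedAlgebra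

section Aux

variable {ι : Type*} [Fintype ι] [DecidableEq ι]

/-- Uniqueness for the linear matrix ODE `f' = f * M`. -/
lemma linODE_unique (M : ℝ → Matrix ι ι ℝ) (hM : Continuous M)
    (f g : ℝ → Matrix ι ι ℝ)
    (hf : ∀ u, HasDerivAt f (f u * M u) u)
    (hg : ∀ u, HasDerivAt g (g u * M u) u)
    (t₀ : ℝ) (h0 : f t₀ = g t₀) (t : ℝ) : f t = g t := by
  set a : ℝ := min t₀ t - 1 with ha
  set b : ℝ := max t₀ t + 1 with hb
  have hab : a ≤ b := by
    have h1 := min_le_left t₀ t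
    have h2 := le_max_left t₀ t
    simp only [ha, hb]; linarith
  obtain ⟨u₀, hu₀, hmax⟩ := isCompact_Icc.exists_isMaxOn (α := ℝ)
    (Set.nonempty_Icc.mpr hab) (hM.norm.continuousOn (s := Icc a b))
  set K : NNReal := ‖M u₀‖₊ with hK
  set v : ℝ → Matrix ι ι ℝ → Matrix ι ι ℝ :=
    fun u y => y * M (projIcc a b hab u) with hv_def
  have hv : ∀ u, LipschitzWith K (v u) := by
    intro u
    apply LipschitzWith.of_dist_le_mul
    intro y z
    simp only [dist_eq_norm, hv_def]
    rw [← sub_mul]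
    calc ‖(y - z) * M (projIcc a b hab u)‖
        ≤ ‖y - z‖ * ‖M (projIcc a b hab u)‖ := norm_mul_le _ _
      _ ≤ ‖y - z‖ * ‖M u₀‖ := by
          exact mul_le_mul_of_nonneg_left (hmax (projIcc a b hab u).2) (norm_nonneg _)
      _ = ↑K * ‖y - z‖ := by rw [mul_comm]; simp [hK]
  have ht₀ : t₀ ∈ Ioo a b := by
    constructor
    · have := min_le_left t₀ t; simp only [ha]; linarith
    · have := le_max_left t₀ t; simp only [hb]; linarith
  have hderiv : ∀ (h : ℝ → Matrix ι ι ℝ), (∀ u, HasDerivAt h (h u * M u) u) →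
      ∀ u ∈ Ioo a b, HasDerivAt h (v u (h u)) u := by
    intro h hh u hu
    have : v u (h u) = h u * M u := by
      simp only [hv_def, projIcc_of_mem hab (Ioo_subset_Icc_self hu)]
    rw [this]; exact hh u
  have := ODE_solution_unique_of_mem_Icc (v := v) (s := fun _ => Set.univ)
    (fun u _ => (hv u).lipschitzOnWith) ht₀
    (fun u _ => (hf u).continuousAt.continuousWithinAt)
    (fun u hu => hderiv f hf u hu) (fun _ _ => trivial)
    (fun u _ => (hg u).continuousAt.continuousWithinAt)
    (fun u hu => hderiv g hg u hu) (fun _ _ => trivial) h0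
  apply this
  constructor
  · have := min_le_right t₀ t; simp only [ha]; linarith
  · have := le_max_right t₀ t; simp only [hb]; linarith

/-- Semigroup property of product integrals. -/
lemma linODE_semigroup (M : ℝ → Matrix ι ι ℝ) (hM : Continuous M)
    (G : ℝ → ℝ → Matrix ι ι ℝ)
    (hG : ∀ s t, HasDerivAt (fun u => G s u) (G s t * M t) t)
    (hG0 : ∀ s, G s s = 1) (s u t : ℝ) : G s u * G u t = G s t := by
  have h1 : ∀ x, HasDerivAt (fun y => G s u * G u y) ((G s u * G u x) * M x) x := by
    intro x
    have h := (hG u x).const_mul (G s u)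
    rw [mul_assoc]; exact h
  exact linODE_unique M hM _ _ h1 (fun x => hG s x) u (by simp [hG0]) t

/-- Backward derivative of product integrals. -/
lemma linODE_backward (M : ℝ → Matrix ι ι ℝ) (hM : Continuous M)
    (G : ℝ → ℝ → Matrix ι ι ℝ)
    (hG : ∀ s t, HasDerivAt (fun u => G s u) (G s t * M t) t)
    (hG0 : ∀ s, G s s = 1) (t x : ℝ) :
    HasDerivAt (fun y => G y t) (-(M x * G x t)) x := by
  have hsg := linODE_semigroup M hM G hG hG0
  have hunit : ∀ y z : ℝ, G y z * G z y = 1 := fun y z => by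
    rw [hsg y z y, hG0]
  set mkU : ℝ → ℝ → (Matrix ι ι ℝ)ˣ := fun y z =>
    ⟨G y z, G z y, hunit y z, hunit z y⟩ with hmkU
  have hfun : (fun y => G y t) = fun y => Ring.inverse (G t y) := by
    funext y
    rw [show G t y = ↑(mkU t y) from rfl, Ring.inverse_unit]
    rfl
  rw [hfun]
  have h1 : HasFDerivAt Ring.inverse
      (-ContinuousLinearMap.mulLeftRight ℝ _ ↑(mkU t x)⁻¹ ↑(mkU t x)⁻¹)
      ((mkU t x : (Matrix ι ι ℝ)ˣ) : Matrix ι ι ℝ) :=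
    hasFDerivAt_ringInverse (mkU t x)
  have h2 := h1.comp_hasDerivAt x (hG t x)
  refine h2.congr_deriv ?_
  have hinv : ((mkU t x)⁻¹ : (Matrix ι ι ℝ)ˣ) = (G x t : Matrix ι ι ℝ) := rfl
  rw [ContinuousLinearMap.neg_apply, hinv, ContinuousLinearMap.mulLeftRight_apply]
  rw [show G x t * (G t x * M x) * G x t = (G x t * G t x) * (M x * G x t) by
    noncomm_ring]
  rw [hunit x t, one_mul]

end Aux

/-- The continuous linear map extracting the `(j, k)` block of a block matrix. -/
private noncomputable def blockCLM {n p : ℕ} (j k : Fin (n + 1)) :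
    Matrix (Fin (n + 1) × Fin p) (Fin (n + 1) × Fin p) ℝ →L[ℝ] Matrix (Fin p) (Fin p) ℝ :=
  LinearMap.toContinuousLinearMap
    { toFun := fun X => Matrix.of fun a b => X (j, a) (k, b)
      map_add' := fun X Y => by ext a b; simp
      map_smul' := fun c X => by ext a b; simp }

private lemma blockCLM_apply {n p : ℕ} (j k : Fin (n + 1))
    (X : Matrix (Fin (n + 1) × Fin p) (Fin (n + 1) × Fin p) ℝ) (a b : Fin p) :
    blockCLM j k X a b = X (j, a) (k, b) := rfl

/-- For a block upper-triangular continuous matrix function with `n + 1`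
blocks of size `p × p` (blocks `A i j`, vanishing for `j < i`), the blocks `B i j (s,t)` of
its product integral satisfy, for every `i` before the last block index,
`B i last (s,t) = ∑_{j > i} ∫_s^t F_{A i i} (s,x) * A i j x * B j last (x,t) dx`,
where `F_{A i i}` is the product integral of the diagonal block `A i i`.  Product integrals
solve the forward equation `∂/∂t F (s,t) = F (s,t) * A t`, `F (s,s) = 1`. -/
theorem productIntegral_block_recursion {n p : ℕ}
    (A : Fin (n + 1) → Fin (n + 1) → ℝ → Matrix (Fin p) (Fin p) ℝ)
    (hA : ∀ i j, Continuous (A i j))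
    (htri : ∀ i j : Fin (n + 1), j < i → A i j = 0)
    (G : ℝ → ℝ → Matrix (Fin (n + 1) × Fin p) (Fin (n + 1) × Fin p) ℝ)
    (hG : ∀ s t : ℝ,
      HasDerivAt (fun u => G s u)
        (G s t * Matrix.of fun q r : Fin (n + 1) × Fin p => A q.1 r.1 t q.2 r.2) t)
    (hG0 : ∀ s : ℝ, G s s = 1)
    (F : Fin (n + 1) → ℝ → ℝ → Matrix (Fin p) (Fin p) ℝ)
    (hF : ∀ i (s t : ℝ), HasDerivAt (fun u => F i s u) (F i s t * A i i t) t)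
    (hF0 : ∀ i (s : ℝ), F i s s = 1) :
    ∀ (i : Fin (n + 1)), i < Fin.last n → ∀ s t : ℝ,
      (Matrix.of fun a b => G s t (i, a) (Fin.last n, b)) =
        ∑ j ∈ Finset.Ioi i,
          ∫ x in s..t,
            F i s x * A i j x *
              Matrix.of fun a b => G x t (j, a) (Fin.last n, b) := by
  intro i hi s t
  set Mf : ℝ → Matrix (Fin (n + 1) × Fin p) (Fin (n + 1) × Fin p) ℝ :=
    fun x => Matrix.of fun q r : Fin (n + 1) × Fin p => A q.1 r.1 x q.2 r.2 with hMf_def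
  have hMc : Continuous Mf := by
    apply continuous_matrix
    intro q r
    exact (hA q.1 r.1).matrix_elem q.2 r.2
  have hG' : ∀ s t : ℝ, HasDerivAt (fun u => G s u) (G s t * Mf t) t := fun s t => hG s t
  have hback : ∀ x : ℝ, HasDerivAt (fun y => G y t) (-(Mf x * G x t)) x :=
    fun x => linODE_backward Mf hMc G hG' hG0 t x
  -- rewrite the goal in terms of the block maps
  have hofBl : ∀ (j : Fin (n + 1)) (x y : ℝ),
      (Matrix.of fun a b => G x y (j, a) (Fin.last n, b)) =
        blockCLM j (Fin.last n) (G x y) := fun _ _ _ => rfl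
  simp only [hofBl]
  -- derivative of the blocks
  have hBl : ∀ (j : Fin (n + 1)) (x : ℝ),
      HasDerivAt (fun y => blockCLM j (Fin.last n) (G y t))
        (blockCLM j (Fin.last n) (-(Mf x * G x t))) x :=
    fun j x => (blockCLM j (Fin.last n)).hasFDerivAt.comp_hasDerivAt x (hback x)
  have hBlcont : ∀ j : Fin (n + 1), Continuous (fun y => blockCLM j (Fin.last n) (G y t)) :=
    fun j => continuous_iff_continuousAt.mpr fun x => (hBl j x).continuousAt
  have hFcont : Continuous (fun x => F i s x) :=
    continuous_iff_continuousAt.mpr fun x => (hF i s x).continuousAt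
  -- the key row computation
  have hkey : ∀ x : ℝ, blockCLM i (Fin.last n) (Mf x * G x t) =
      A i i x * blockCLM i (Fin.last n) (G x t) +
        ∑ j ∈ Finset.Ioi i, A i j x * blockCLM j (Fin.last n) (G x t) := by
    intro x
    have hrow : blockCLM i (Fin.last n) (Mf x * G x t) =
        ∑ q : Fin (n + 1), A i q x * blockCLM q (Fin.last n) (G x t) := by
      ext a b
      rw [blockCLM_apply, Matrix.mul_apply, Fintype.sum_prod_type]
      rw [Matrix.sum_apply]
      refine Finset.sum_congr rfl fun q _ => ?_
      rw [Matrix.mul_apply]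
      refine Finset.sum_congr rfl fun c _ => ?_
      rw [blockCLM_apply]
      rfl
    rw [hrow, ← Finset.add_sum_erase _ _ (Finset.mem_univ i)]
    congr 1
    refine (Finset.sum_subset ?_ ?_).symm
    · intro q hq
      exact Finset.mem_erase.mpr ⟨(Finset.mem_Ioi.mp hq).ne', Finset.mem_univ q⟩
    · intro q hq hq'
      have h1 : q ≠ i := (Finset.mem_erase.mp hq).1
      have h2 : q < i := lt_of_le_of_ne (not_lt.mp (fun h => hq' (Finset.mem_Ioi.mpr h))) h1
      rw [htri i q h2]; simp
  -- derivative of Φ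
  have hΦ : ∀ x : ℝ, HasDerivAt (fun y => F i s y * blockCLM i (Fin.last n) (G y t))
      (-(∑ j ∈ Finset.Ioi i,
        F i s x * A i j x * blockCLM j (Fin.last n) (G x t))) x := by
    intro x
    have h1 := (hF i s x).mul (hBl i x)
    have h2 : blockCLM i (Fin.last n) (-(Mf x * G x t)) =
        -(A i i x * blockCLM i (Fin.last n) (G x t) +
          ∑ j ∈ Finset.Ioi i, A i j x * blockCLM j (Fin.last n) (G x t)) := by
      rw [← hkey x, map_neg]
    rw [h2] at h1
    refine h1.congr_deriv ?_
    simp only [mul_neg, mul_add, Finset.mul_sum, ← mul_assoc]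
    abel
  -- integrability
  have hint :=
    fun j : Fin (n + 1) => ((hFcont.mul (hA i j)).mul (hBlcont j)).intervalIntegrable (μ := volume) s t
  have hintc : Continuous (fun x => -(∑ j ∈ Finset.Ioi i,
      F i s x * A i j x * blockCLM j (Fin.last n) (G x t))) :=
    (continuous_finset_sum _ fun j _ => (hFcont.mul (hA i j)).mul (hBlcont j)).neg
  have hFTC := intervalIntegral.integral_eq_sub_of_hasDerivAt
    (f := fun y => F i s y * blockCLM i (Fin.last n) (G y t))
    (fun x _ => hΦ x) (hintc.intervalIntegrable s t)
  have hBlt : blockCLM i (Fin.last n) (G t t) = 0 := by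
    ext a b
    rw [blockCLM_apply, hG0]
    exact Matrix.one_apply_ne (fun h => hi.ne (congrArg Prod.fst h))
  simp only [hBlt, mul_zero, hF0, one_mul, zero_sub] at hFTC
  rw [intervalIntegral.integral_neg,
    intervalIntegral.integral_finset_sum
      (f := fun j x => F i s x * A i j x * blockCLM j (Fin.last n) (G x t)) (fun j _ => hint j)] at hFTC
  exact (neg_injective hFTC).symm
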